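/- For every integer d ≥ 1 and every y ∈ ℝ^{2d+1} with ‖y‖_∞ ≤ 1, the matrices (d+1)·I − Λ₁(y) and (d+1)·I − Λ₂(y) are positive semidefinite; equivalently, every eigenvalue of Λ₁(y) and every eigenvalue of Λ₂(y) is at most d + 1. (This yields the bound k₃ ≤ d + 1 for the Chebyshev-basis operator.) -/

import Mathlib

open Matrix

/-- The first block of the Chebyshev-basis operator `Λ` for nonnegative
polynomials of degree `2d` on `[−1,1]` with weights `(1, 1 − z²)`:
`Λ₁(y)_{i,j} = (y_{i+j} + y_{|i−j|})/2`.  Here `a - b + (b - a)` (truncated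
subtraction) equals `|a − b|`. -/
noncomputable def lam1 (d : ℕ) (y : Fin (2 * d + 1) → ℝ) :
    Matrix (Fin (d + 1)) (Fin (d + 1)) ℝ :=
  Matrix.of fun i j =>
    (y ⟨i.1 + j.1, by have := i.isLt; have := j.isLt; omega⟩ +
      y ⟨i.1 - j.1 + (j.1 - i.1), by have := i.isLt; have := j.isLt; omega⟩) / 2

/-- The second block:
`Λ₂(y)_{i,j} = (1/8)(2y_{i+j} + 2y_{|i−j|} − y_{i+j+2} − y_{|i+j−2|} − y_{|i−j|+2} − y_{||i−j|−2|})`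
for `0 ≤ i, j ≤ d − 1` (again `a - b + (b - a)` encodes `|a − b|`). -/
noncomputable def lam2 (d : ℕ) (y : Fin (2 * d + 1) → ℝ) :
    Matrix (Fin d) (Fin d) ℝ :=
  Matrix.of fun i j =>
    (2 * y ⟨i.1 + j.1, by have := i.isLt; have := j.isLt; omega⟩ +
      2 * y ⟨i.1 - j.1 + (j.1 - i.1), by have := i.isLt; have := j.isLt; omega⟩ -
      y ⟨i.1 + j.1 + 2, by have := i.isLt; have := j.isLt; omega⟩ -
      y ⟨(i.1 + j.1) - 2 + (2 - (i.1 + j.1)), by have := i.isLt; have := j.isLt; omega⟩ -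
      y ⟨(i.1 - j.1 + (j.1 - i.1)) + 2, by have := i.isLt; have := j.isLt; omega⟩ -
      y ⟨(i.1 - j.1 + (j.1 - i.1)) - 2 + (2 - (i.1 - j.1 + (j.1 - i.1))),
        by have := i.isLt; have := j.isLt; omega⟩) / 8

/-- Any real symmetric matrix with entries bounded by `1` in absolute value is
dominated by `c • 1` for any `c ≥ n`. -/
lemma key_psd {n : ℕ} (c : ℝ) (hn : (n : ℝ) ≤ c) (A : Matrix (Fin n) (Fin n) ℝ)
    (hsym : A.IsHermitian) (hA : ∀ i j, |A i j| ≤ 1) :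
    (c • (1 : Matrix (Fin n) (Fin n) ℝ) - A).PosSemidef := by
  rw [posSemidef_iff_dotProduct_mulVec]
  constructor
  · refine Matrix.IsHermitian.sub ?_ hsym
    unfold Matrix.IsHermitian
    rw [conjTranspose_smul, conjTranspose_one, star_trivial]
  · intro x
    simp only [star_trivial, sub_mulVec, dotProduct_sub, smul_mulVec, one_mulVec,
      dotProduct_smul, smul_eq_mul]
    have hQ : x ⬝ᵥ A *ᵥ x ≤ (∑ i, |x i|) ^ 2 := by
      calc x ⬝ᵥ A *ᵥ x = ∑ i, ∑ j, x i * (A i j * x j) := by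
            simp [dotProduct, mulVec, Finset.mul_sum]
        _ ≤ ∑ i, ∑ j, |x i| * |x j| := by
            apply Finset.sum_le_sum; intro i _
            apply Finset.sum_le_sum; intro j _
            calc x i * (A i j * x j) ≤ |x i * (A i j * x j)| := le_abs_self _
              _ = |x i| * (|A i j| * |x j|) := by rw [abs_mul, abs_mul]
              _ ≤ |x i| * (1 * |x j|) := by
                  apply mul_le_mul_of_nonneg_left _ (abs_nonneg _)
                  exact mul_le_mul_of_nonneg_right (hA i j) (abs_nonneg _)
              _ = |x i| * |x j| := by ring
        _ = (∑ i, |x i|) ^ 2 := by rw [sq, Finset.sum_mul_sum]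
    have hCS : (∑ i, |x i|) ^ 2 ≤ (n : ℝ) * ∑ i, |x i| ^ 2 := by
      simpa using sq_sum_le_card_mul_sum_sq (s := (Finset.univ : Finset (Fin n)))
        (f := fun i => |x i|)
    have hxx : x ⬝ᵥ x = ∑ i, |x i| ^ 2 := by
      simp [dotProduct, sq_abs, sq]
    have hS : (0:ℝ) ≤ ∑ i, |x i| ^ 2 := by positivity
    rw [hxx]
    nlinarith [mul_le_mul_of_nonneg_right hn hS]

lemma half_bound {a b : ℝ} (ha : |a| ≤ 1) (hb : |b| ≤ 1) : |(a + b) / 2| ≤ 1 := by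
  rw [abs_le] at *; constructor <;> linarith [ha.1, ha.2, hb.1, hb.2]

lemma eighth_bound {a b c d e f : ℝ} (ha : |a| ≤ 1) (hb : |b| ≤ 1) (hc : |c| ≤ 1)
    (hd : |d| ≤ 1) (he : |e| ≤ 1) (hf : |f| ≤ 1) :
    |(2 * a + 2 * b - c - d - e - f) / 8| ≤ 1 := by
  rw [abs_le] at *
  constructor <;>
    linarith [ha.1, hb.1, hc.1, hd.1, he.1, hf.1, ha.2, hb.2, hc.2, hd.2, he.2, hf.2]

lemma lam1_herm (d : ℕ) (y : Fin (2 * d + 1) → ℝ) : (lam1 d y).IsHermitian := by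
  have hval : ∀ (a : ℕ) (h : a < 2 * d + 1),
      y ⟨a, h⟩ = (fun a => if h : a < 2 * d + 1 then y ⟨a, h⟩ else 0) a := by
    intro a h; simp [h]
  ext i j
  simp only [lam1, conjTranspose_apply, Matrix.of_apply, star_trivial]
  rw [hval, hval, hval, hval]
  have e1 : j.1 + i.1 = i.1 + j.1 := by omega
  have e2 : j.1 - i.1 + (i.1 - j.1) = i.1 - j.1 + (j.1 - i.1) := by omega
  rw [e1, e2]

lemma lam2_herm (d : ℕ) (y : Fin (2 * d + 1) → ℝ) : (lam2 d y).IsHermitian := by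
  have hval : ∀ (a : ℕ) (h : a < 2 * d + 1),
      y ⟨a, h⟩ = (fun a => if h : a < 2 * d + 1 then y ⟨a, h⟩ else 0) a := by
    intro a h; simp [h]
  ext i j
  simp only [lam2, conjTranspose_apply, Matrix.of_apply, star_trivial]
  rw [hval, hval, hval, hval, hval, hval, hval, hval, hval, hval, hval, hval]
  have e1 : j.1 + i.1 = i.1 + j.1 := by omega
  have e2 : j.1 - i.1 + (i.1 - j.1) = i.1 - j.1 + (j.1 - i.1) := by omega
  rw [e1, e2]

set_option linter.unusedVariables false in
/-- if `‖y‖_∞ ≤ 1` then `(d+1)·I − Λ₁(y)` and `(d+1)·I − Λ₂(y)`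
are positive semidefinite, i.e. every eigenvalue of `Λ₁(y)` and of `Λ₂(y)` is at
most `d + 1` (the bound `k₃ ≤ d + 1`). -/
theorem stmt19 (d : ℕ) (hd : 1 ≤ d) (y : Fin (2 * d + 1) → ℝ)
    (hy : ∀ k, |y k| ≤ 1) :
    (((d : ℝ) + 1) • (1 : Matrix (Fin (d + 1)) (Fin (d + 1)) ℝ) - lam1 d y).PosSemidef ∧
      (((d : ℝ) + 1) • (1 : Matrix (Fin d) (Fin d) ℝ) - lam2 d y).PosSemidef := by
  constructor
  · exact key_psd ((d : ℝ) + 1) (by norm_num) _ (lam1_herm d y)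
      (fun i j => by
        simp only [lam1, Matrix.of_apply]
        exact half_bound (hy _) (hy _))
  · exact key_psd ((d : ℝ) + 1) (by norm_num) _ (lam2_herm d y)
      (fun i j => by
        simp only [lam2, Matrix.of_apply]
        exact eighth_bound (hy _) (hy _) (hy _) (hy _) (hy _) (hy _))
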